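/- For every positive integer k, the sequence of iterates k, z(k), z(z(k)), ... of the Fibonacci entry point function eventually reaches a fixed point of z. -/

import Mathlib

lemma fib_cast_binet {K : Type*} [Field K] (t : K) (ht : t^2 = 5) (h2 : (2:K) ≠ 0) (n : ℕ) :
    (Nat.fib n : K) * t = ((1+t)/2)^n - ((1-t)/2)^n := by
  induction n using Nat.twoStepInduction with
  | zero => simp
  | one => simp only [Nat.fib_one, Nat.cast_one, one_mul, pow_one]; field_simp; ring
  | more n ih1 ih2 =>
    rw [Nat.fib_add_two]
    push_cast
    have ha : ((1+t)/2)^2 = ((1+t)/2) + 1 := by field_simp; linear_combination ht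
    have hb : ((1-t)/2)^2 = ((1-t)/2) + 1 := by field_simp; linear_combination ht
    have ea : ((1+t)/2)^(n+2) = ((1+t)/2)^(n+1) + ((1+t)/2)^n := by
      calc ((1+t)/2)^(n+2) = ((1+t)/2)^n * ((1+t)/2)^2 := by ring
      _ = ((1+t)/2)^n * (((1+t)/2) + 1) := by rw [ha]
      _ = ((1+t)/2)^(n+1) + ((1+t)/2)^n := by ring
    have eb : ((1-t)/2)^(n+2) = ((1-t)/2)^(n+1) + ((1-t)/2)^n := by
      calc ((1-t)/2)^(n+2) = ((1-t)/2)^n * ((1-t)/2)^2 := by ring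
      _ = ((1-t)/2)^n * (((1-t)/2) + 1) := by rw [hb]
      _ = ((1-t)/2)^(n+1) + ((1-t)/2)^n := by ring
    rw [ea, eb, add_mul, ih1, ih2]; ring

lemma prime_dvd_fib_sq_sub_one {p : ℕ} (hp : p.Prime) (hp5 : p ≠ 5) :
    p ∣ Nat.fib (p^2 - 1) := by
  rcases eq_or_ne p 2 with rfl | hp2
  · decide
  haveI : Fact p.Prime := ⟨hp⟩
  set K := AlgebraicClosure (ZMod p) with hK
  haveI : CharP K p := charP_of_injective_algebraMap (algebraMap (ZMod p) K).injective p
  obtain ⟨t, ht⟩ := IsAlgClosed.exists_pow_nat_eq (k := K) (5:K) (n := 2) two_pos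
  have h2 : (2:K) ≠ 0 := by
    have : ¬ (p ∣ 2) := fun h => hp2 ((Nat.prime_dvd_prime_iff_eq hp Nat.prime_two).mp h)
    simpa using fun h => this ((CharP.cast_eq_zero_iff K p 2).mp (by exact_mod_cast h))
  have h5 : (5:K) ≠ 0 := by
    have : ¬ (p ∣ 5) := fun h => hp5 ((Nat.prime_dvd_prime_iff_eq hp (by norm_num)).mp h)
    simpa using fun h => this ((CharP.cast_eq_zero_iff K p 5).mp (by exact_mod_cast h))
  have ht0 : t ≠ 0 := fun h => h5 (by rw [← ht, h]; ring)
  -- Frobenius facts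
  have hfrob5 : (5:K)^p = 5 := by
    have := map_natCast (frobenius K p) 5
    simpa [frobenius_def] using this
  have hfrob2 : (2:K)^p = 2 := by
    have := map_natCast (frobenius K p) 2
    simpa [frobenius_def] using this
  have htp : t^p = t ∨ t^p = -t := by
    have h : (t^p) * (t^p) = t * t := by
      rw [← sq, ← sq]
      calc (t^p)^2 = (t^2)^p := by ring
        _ = (5:K)^p := by rw [ht]
        _ = 5 := hfrob5
        _ = t^2 := ht.symm
    exact mul_self_eq_mul_self_iff.mp h
  have hone : (1:K)^p = 1 := one_pow p
  have hαp : ((1+t)/2)^p = (1 + t^p)/2 := by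
    rw [div_pow, add_pow_char, hone, hfrob2]
  have hβp : ((1-t)/2)^p = (1 - t^p)/2 := by
    have : (1:K) - t = 1 + (-t) := by ring
    rw [this, div_pow, add_pow_char, hone, hfrob2]
    congr 1
    rw [neg_pow]
    rcases Nat.Prime.eq_two_or_odd' hp with h | h
    · exact absurd h hp2
    · rw [Odd.neg_one_pow h]; ring
  have key : p ∣ Nat.fib (p - 1) ∨ p ∣ Nat.fib (p + 1) := by
    rcases htp with h | h
    · left
      have hα : ((1+t)/2)^p = (1+t)/2 := by rw [hαp, h]
      have hβ : ((1-t)/2)^p = (1-t)/2 := by rw [hβp, h]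
      have hprod : ((1+t)/2) * ((1-t)/2) = -1 := by
        rw [div_mul_div_comm, div_eq_iff (mul_ne_zero h2 h2)]; linear_combination -ht
      have hα0 : ((1+t)/2) ≠ 0 := by
        intro h0; rw [h0, zero_mul] at hprod; exact one_ne_zero (neg_eq_zero.mp hprod.symm)
      have hβ0 : ((1-t)/2) ≠ 0 := by
        intro h0; rw [h0, mul_zero] at hprod; exact one_ne_zero (neg_eq_zero.mp hprod.symm)
      have hα1 : ((1+t)/2)^(p-1) = 1 := by
        have : ((1+t)/2)^(p-1) * ((1+t)/2) = 1 * ((1+t)/2) := by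
          rw [← pow_succ, Nat.sub_add_cancel hp.one_lt.le, hα, one_mul]
        exact mul_right_cancel₀ hα0 this
      have hβ1 : ((1-t)/2)^(p-1) = 1 := by
        have : ((1-t)/2)^(p-1) * ((1-t)/2) = 1 * ((1-t)/2) := by
          rw [← pow_succ, Nat.sub_add_cancel hp.one_lt.le, hβ, one_mul]
        exact mul_right_cancel₀ hβ0 this
      have := fib_cast_binet t ht h2 (p-1)
      rw [hα1, hβ1, sub_self] at this
      have hfib0 : (Nat.fib (p-1) : K) = 0 := by
        rcases mul_eq_zero.mp this with h' | h'
        · exact h'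
        · exact absurd h' ht0
      exact_mod_cast (CharP.cast_eq_zero_iff K p _).mp hfib0
    · right
      have hα : ((1+t)/2)^p = (1-t)/2 := by rw [hαp, h]; ring
      have hβ : ((1-t)/2)^p = (1+t)/2 := by rw [hβp, h]; ring
      have h0 : ((1+t)/2)^(p+1) - ((1-t)/2)^(p+1) = 0 := by
        rw [pow_succ, pow_succ, hα, hβ]; ring
      have := fib_cast_binet t ht h2 (p+1)
      rw [h0] at this
      have hfib0 : (Nat.fib (p+1) : K) = 0 := by
        rcases mul_eq_zero.mp this with h' | h'
        · exact h'
        · exact absurd h' ht0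
      exact_mod_cast (CharP.cast_eq_zero_iff K p _).mp hfib0
  obtain ⟨q, rfl⟩ : ∃ q, p = q+1 := ⟨p-1, by have := hp.pos; omega⟩
  have hsq : (q+1)^2 - 1 = q * (q+2) := by
    have h' : (q+1)^2 = q*(q+2)+1 := by ring
    rw [h', Nat.add_sub_cancel]
  rcases key with h | h
  · refine h.trans (Nat.fib_dvd _ _ ?_)
    rw [hsq]; simp
  · refine h.trans (Nat.fib_dvd _ _ ?_)
    rw [hsq]; exact ⟨q, by ring⟩



lemma fib_mul_modEq (m' k : ℕ) :
    Nat.fib (k*(m'+1)) ≡ k * Nat.fib (m'+1) * Nat.fib (m'+2)^(k-1) [MOD Nat.fib (m'+1)^2] ∧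
    Nat.fib (k*(m'+1)+1) ≡ Nat.fib (m'+2)^k [MOD Nat.fib (m'+1)^2] := by
  set F := Nat.fib (m'+1) with hF
  set G := Nat.fib (m'+2) with hG
  have hGe : G = Nat.fib m' + F := by rw [hG, hF, Nat.fib_add_two]
  induction k with
  | zero => simp [Nat.ModEq.refl]
  | succ k ih =>
    obtain ⟨ih1, ih2⟩ := ih
    have e1 : (k+1)*(m'+1) = k*(m'+1) + m' + 1 := by ring
    constructor
    · rw [e1, Nat.fib_add]
      have step1 : Nat.fib (k*(m'+1)) * Nat.fib m' + Nat.fib (k*(m'+1)+1) * F ≡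
          (k * F * G^(k-1)) * Nat.fib m' + G^k * F [MOD F^2] :=
        (ih1.mul_right _).add (ih2.mul_right _)
      refine step1.trans ?_
      have e2 : (k+1) * F * G^((k+1)-1) =
          (k * F * G^(k-1)) * Nat.fib m' + G^k * F + k * G^(k-1) * F^2 := by
        rcases Nat.eq_zero_or_pos k with rfl | hk
        · simp
        · obtain ⟨j, rfl⟩ : ∃ j, k = j+1 := ⟨k-1, by omega⟩
          simp only [Nat.add_sub_cancel, hGe]
          ring
      rw [e2]
      exact (Nat.modEq_iff_dvd' (Nat.le_add_right _ _)).mpr (by simpa using dvd_mul_left (F^2) (k * G^(k-1)))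
    · have e3 : (k+1)*(m'+1) + 1 = k*(m'+1) + (m'+1) + 1 := by ring
      rw [e3, Nat.fib_add]
      have step1 : Nat.fib (k*(m'+1)) * Nat.fib (m'+1) + Nat.fib (k*(m'+1)+1) * Nat.fib (m'+1+1) ≡
          (k * F * G^(k-1)) * F + G^k * G [MOD F^2] :=
        (ih1.mul_right _).add (ih2.mul_right _)
      refine step1.trans ?_
      have e4 : (k * F * G^(k-1)) * F + G^k * G = G^(k+1) + k * G^(k-1) * F^2 := by ring
      rw [e4]
      have : G^(k+1) + k*G^(k-1)*F^2 ≡ G^(k+1) + 0 [MOD F^2] :=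
        Nat.ModEq.add_left _ ((Nat.modEq_zero_iff_dvd).mpr (dvd_mul_left (F^2) (k * G^(k-1))))
      simpa using this

lemma pow_succ_dvd_fib_mul {p M e : ℕ} (he : 1 ≤ e) (h : p^e ∣ Nat.fib M) :
    p^(e+1) ∣ Nat.fib (p*M) := by
  rcases Nat.eq_zero_or_pos M with rfl | hM
  · simpa using dvd_zero _
  obtain ⟨m', rfl⟩ : ∃ m', M = m'+1 := ⟨M-1, by omega⟩
  have hmod := (fib_mul_modEq m' p).1
  set F := Nat.fib (m'+1) with hF
  set A := p * F * Nat.fib (m'+2)^(p-1) with hA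
  have hdA : p^(e+1) ∣ A := by
    have h1 : p^(e+1) ∣ p * F := by
      rw [pow_succ']
      exact mul_dvd_mul_left p h
    exact h1.mul_right _
  have hdF : p^(e+1) ∣ F^2 := by
    calc p^(e+1) ∣ p^(2*e) := pow_dvd_pow p (by omega)
    _ = (p^e)^2 := by rw [← pow_mul, mul_comm]
    _ ∣ F^2 := pow_dvd_pow_of_dvd h 2
  have hz := hmod.dvd
  have h1 : (p:ℤ)^(e+1) ∣ ((A:ℤ) - Nat.fib (p*(m'+1))) := by
    have hcast : ((p:ℤ))^(e+1) ∣ ((F^2 : ℕ) : ℤ) := by exact_mod_cast hdF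
    exact dvd_trans hcast hz
  have h2 : (p:ℤ)^(e+1) ∣ (Nat.fib (p*(m'+1)) : ℤ) := by
    have hA' : (p:ℤ)^(e+1) ∣ (A:ℤ) := by exact_mod_cast hdA
    have := dvd_sub hA' h1
    simpa using this
  exact_mod_cast h2

lemma pow_dvd_fib_pow_mul {p m e : ℕ} (he : 1 ≤ e) (h : p ∣ Nat.fib m) :
    p^e ∣ Nat.fib (p^(e-1) * m) := by
  induction e with
  | zero => omega
  | succ e ih =>
    rcases Nat.eq_zero_or_pos e with rfl | hee
    · simpa using h
    · obtain ⟨e', rfl⟩ : ∃ e', e = e'+1 := ⟨e-1, by omega⟩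
      have ihh := ih (by omega)
      simp only [Nat.add_sub_cancel] at ihh ⊢
      have := pow_succ_dvd_fib_mul (Nat.le_add_left 1 e') ihh
      have heq : p * (p^e' * m) = p^(e'+1) * m := by ring
      rwa [heq] at this


/-- The Fibonacci entry point: least positive `m` with `n ∣ Nat.fib m`. -/
noncomputable def fibEntry (n : ℕ) : ℕ := sInf {m | 0 < m ∧ n ∣ Nat.fib m}



/-- Bound for the entry point of `q^e`. -/
def bnd (q e : ℕ) : ℕ := if q = 5 then 5^e else q^(e-1) * (q^2 - 1)

lemma bnd_pos {q : ℕ} (e : ℕ) (hq : 2 ≤ q) : 0 < bnd q e := by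
  unfold bnd
  split
  · positivity
  · have : 4 ≤ q^2 := by nlinarith
    have h1 : 0 < q^2 - 1 := by omega
    have h2 : 0 < q^(e-1) := Nat.pow_pos (by omega)
    positivity

lemma prime_pow_dvd_fib_bnd {q e : ℕ} (hq : q.Prime) (he : 1 ≤ e) :
    q^e ∣ Nat.fib (bnd q e) := by
  unfold bnd
  split
  · next h =>
    subst h
    have h5 : (5:ℕ) ∣ Nat.fib 5 := by decide
    have := pow_dvd_fib_pow_mul he h5
    have heq : (5:ℕ)^(e-1) * 5 = 5^e := by
      rw [← pow_succ]; congr 1; omega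
    rwa [heq] at this
  · next h =>
    exact pow_dvd_fib_pow_mul he (prime_dvd_fib_sq_sub_one hq h)

lemma exists_pos_dvd_fib : ∀ n : ℕ, 0 < n → ∃ M, 0 < M ∧ n ∣ Nat.fib M := by
  intro n
  induction n using Nat.recOnPosPrimePosCoprime with
  | prime_pow p e hp he =>
    intro _
    exact ⟨bnd p e, bnd_pos e hp.two_le, prime_pow_dvd_fib_bnd hp he⟩
  | zero => intro h; omega
  | one => intro _; exact ⟨1, one_pos, one_dvd _⟩
  | coprime a b ha hb hab iha ihb =>
    intro _
    obtain ⟨Ma, hMa, hda⟩ := iha (by omega)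
    obtain ⟨Mb, hMb, hdb⟩ := ihb (by omega)
    refine ⟨Ma * Mb, Nat.mul_pos hMa hMb, Nat.Coprime.mul_dvd_of_dvd_of_dvd hab ?_ ?_⟩
    · exact hda.trans (Nat.fib_dvd _ _ ⟨Mb, rfl⟩)
    · exact hdb.trans (Nat.fib_dvd _ _ ⟨Ma, mul_comm _ _⟩)

lemma fibEntry_mem {n : ℕ} (hn : 0 < n) :
    0 < fibEntry n ∧ n ∣ Nat.fib (fibEntry n) := by
  have h := exists_pos_dvd_fib n hn
  obtain ⟨M, hM1, hM2⟩ := h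
  exact Nat.sInf_mem (⟨M, hM1, hM2⟩ : Set.Nonempty {m | 0 < m ∧ n ∣ Nat.fib m})

lemma fibEntry_pos {n : ℕ} (hn : 0 < n) : 0 < fibEntry n := (fibEntry_mem hn).1

lemma dvd_fib_fibEntry {n : ℕ} (hn : 0 < n) : n ∣ Nat.fib (fibEntry n) := (fibEntry_mem hn).2

lemma fibEntry_dvd {n m : ℕ} (hn : 0 < n) (h : n ∣ Nat.fib m) : fibEntry n ∣ m := by
  rcases Nat.eq_zero_or_pos m with rfl | hm
  · exact dvd_zero _
  have hg : n ∣ Nat.fib (Nat.gcd (fibEntry n) m) := by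
    rw [Nat.fib_gcd]
    exact Nat.dvd_gcd (dvd_fib_fibEntry hn) h
  have hgpos : 0 < Nat.gcd (fibEntry n) m := Nat.gcd_pos_of_pos_right _ hm
  have hle : fibEntry n ≤ Nat.gcd (fibEntry n) m := Nat.sInf_le ⟨hgpos, hg⟩
  have hdl : Nat.gcd (fibEntry n) m ∣ fibEntry n := Nat.gcd_dvd_left _ _
  have : Nat.gcd (fibEntry n) m = fibEntry n :=
    le_antisymm (Nat.le_of_dvd (fibEntry_pos hn) hdl) hle
  rw [← this]
  exact Nat.gcd_dvd_right _ _

lemma dvd_fib_iff {n m : ℕ} (hn : 0 < n) : n ∣ Nat.fib m ↔ fibEntry n ∣ m :=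
  ⟨fibEntry_dvd hn, fun h => (dvd_fib_fibEntry hn).trans (Nat.fib_dvd _ _ h)⟩

lemma fibEntry_dvd_fibEntry {u n : ℕ} (hu : 0 < u) (hn : 0 < n) (h : u ∣ n) :
    fibEntry u ∣ fibEntry n :=
  fibEntry_dvd hu (h.trans (dvd_fib_fibEntry hn))

lemma fibEntry_lcm {u v : ℕ} (hu : 0 < u) (hv : 0 < v) :
    fibEntry (Nat.lcm u v) = Nat.lcm (fibEntry u) (fibEntry v) := by
  have hl : 0 < Nat.lcm u v := Nat.pos_of_ne_zero (Nat.lcm_ne_zero (by omega) (by omega))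
  apply Nat.dvd_antisymm
  · apply fibEntry_dvd hl
    apply Nat.lcm_dvd
    · exact (dvd_fib_fibEntry hu).trans (Nat.fib_dvd _ _ (Nat.dvd_lcm_left _ _))
    · exact (dvd_fib_fibEntry hv).trans (Nat.fib_dvd _ _ (Nat.dvd_lcm_right _ _))
  · exact Nat.lcm_dvd (fibEntry_dvd_fibEntry hu hl (Nat.dvd_lcm_left _ _))
      (fibEntry_dvd_fibEntry hv hl (Nat.dvd_lcm_right _ _))

lemma fibEntry_eq_of {n m : ℕ} (hm : 0 < m) (hd : n ∣ Nat.fib m)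
    (hmin : ∀ j < m, 0 < j → ¬ n ∣ Nat.fib j) : fibEntry n = m := by
  have hne : Set.Nonempty {m | 0 < m ∧ n ∣ Nat.fib m} := ⟨m, ⟨hm, hd⟩⟩
  unfold fibEntry
  apply le_antisymm (Nat.sInf_le (⟨hm, hd⟩ : m ∈ {m | 0 < m ∧ n ∣ Nat.fib m}))
  refine le_csInf hne ?_
  intro j hj
  by_contra hlt
  push_neg at hlt
  exact hmin j hlt hj.1 hj.2

lemma fibEntry_one : fibEntry 1 = 1 := fibEntry_eq_of one_pos (one_dvd _) (by decide)

lemma pow_dvd_fibEntry_cases : ∀ n : ℕ, 0 < n → ∀ r k : ℕ, r.Prime → 1 ≤ k →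
    r^k ∣ fibEntry n → ∃ q ∈ n.primeFactors, r^k ∣ bnd q (n.factorization q) := by
  intro n
  induction n using Nat.recOnPosPrimePosCoprime with
  | prime_pow q e hq he =>
    intro _ r k hr hk h
    refine ⟨q, ?_, ?_⟩
    · rw [Nat.primeFactors_prime_pow (by omega) hq]
      exact Finset.mem_singleton_self q
    · have hze : fibEntry (q^e) ∣ bnd q e :=
        fibEntry_dvd (pow_pos hq.pos e) (prime_pow_dvd_fib_bnd hq he)
      rw [hq.factorization_pow, Finsupp.single_eq_same]
      exact h.trans hze
  | zero => intro h; omega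
  | one =>
    intro _ r k hr hk h
    rw [fibEntry_one] at h
    exact absurd (Nat.le_of_dvd one_pos h) (by
      have := hr.two_le
      have : 2 ≤ r^k := le_trans this (Nat.le_self_pow (by omega) r)
      omega)
  | coprime a b ha hb hab iha ihb =>
    intro _ r k hr hk h
    have ha0 : 0 < a := by omega
    have hb0 : 0 < b := by omega
    have hlcm : Nat.lcm a b = a * b := Nat.Coprime.lcm_eq_mul hab
    have hz : fibEntry (a*b) = Nat.lcm (fibEntry a) (fibEntry b) := by
      rw [← hlcm]; exact fibEntry_lcm ha0 hb0
    rw [hz] at h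
    have hza : fibEntry a ≠ 0 := (fibEntry_pos ha0).ne'
    have hzb : fibEntry b ≠ 0 := (fibEntry_pos hb0).ne'
    have hcase : r^k ∣ fibEntry a ∨ r^k ∣ fibEntry b := by
      have hlne : Nat.lcm (fibEntry a) (fibEntry b) ≠ 0 := Nat.lcm_ne_zero hza hzb
      have hk1 := (hr.pow_dvd_iff_le_factorization hlne).mp h
      rw [Nat.factorization_lcm hza hzb] at hk1
      simp only [Finsupp.sup_apply, le_sup_iff] at hk1
      rcases hk1 with h1 | h1
      · exact Or.inl ((hr.pow_dvd_iff_le_factorization hza).mpr h1)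
      · exact Or.inr ((hr.pow_dvd_iff_le_factorization hzb).mpr h1)
    have hfac : ∀ q, q ∈ a.primeFactors → (a*b).factorization q = a.factorization q := by
      intro q hq
      rw [Nat.factorization_mul (by omega) (by omega)]
      have : b.factorization q = 0 := by
        apply Nat.factorization_eq_zero_of_not_dvd
        intro hqb
        have hqa := Nat.dvd_of_mem_primeFactors hq
        have := Nat.Coprime.eq_one_of_dvd (Nat.Coprime.coprime_dvd_left hqa hab) hqb
        exact (Nat.prime_of_mem_primeFactors hq).one_lt.ne' this
      simp [this]
    have hfacb : ∀ q, q ∈ b.primeFactors → (a*b).factorization q = b.factorization q := by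
      intro q hq
      rw [Nat.factorization_mul (by omega) (by omega)]
      have : a.factorization q = 0 := by
        apply Nat.factorization_eq_zero_of_not_dvd
        intro hqa
        have hqb := Nat.dvd_of_mem_primeFactors hq
        have := Nat.Coprime.eq_one_of_dvd (Nat.Coprime.coprime_dvd_left hqb hab.symm) hqa
        exact (Nat.prime_of_mem_primeFactors hq).one_lt.ne' this
      simp [this]
    rcases hcase with h1 | h1
    · obtain ⟨q, hq, hd⟩ := iha ha0 r k hr hk h1
      refine ⟨q, ?_, ?_⟩
      · rw [Nat.primeFactors_mul (by omega) (by omega)]; exact Finset.mem_union_left _ hq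
      · rwa [hfac q hq]
    · obtain ⟨q, hq, hd⟩ := ihb hb0 r k hr hk h1
      refine ⟨q, ?_, ?_⟩
      · rw [Nat.primeFactors_mul (by omega) (by omega)]; exact Finset.mem_union_right _ hq
      · rwa [hfacb q hq]

-- small values
lemma fibEntry_two : fibEntry 2 = 3 := fibEntry_eq_of (by norm_num) (by decide) (by decide)
lemma fibEntry_three : fibEntry 3 = 4 := fibEntry_eq_of (by norm_num) (by decide) (by decide)
lemma fibEntry_four : fibEntry 4 = 6 := fibEntry_eq_of (by norm_num) (by decide) (by decide)
lemma fibEntry_six : fibEntry 6 = 12 := fibEntry_eq_of (by norm_num) (by decide) (by decide)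
lemma fibEntry_eight : fibEntry 8 = 6 := fibEntry_eq_of (by norm_num) (by decide) (by decide)
lemma fibEntry_twelve : fibEntry 12 = 12 := fibEntry_eq_of (by norm_num) (by decide) (by decide)
lemma fibEntry_twentyfour : fibEntry 24 = 12 := fibEntry_eq_of (by norm_num) (by decide) (by decide)

def A2 : ℕ → ℕ → ℕ
  | 0, 0 => 0 | 1, 0 => 0 | 0, 1 => 2 | 1, 1 => 2
  | 2, 0 => 1 | 2, 1 => 2 | 3, 0 => 1 | 3, 1 => 2
  | _, _ => 0

def B3 : ℕ → ℕ → ℕ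
  | 0, 0 => 0 | 1, 0 => 1 | 0, 1 => 0 | 1, 1 => 1
  | 2, 0 => 1 | 2, 1 => 1 | 3, 0 => 1 | 3, 1 => 1
  | _, _ => 0

def rnk : ℕ → ℕ → ℕ
  | 0, 0 => 0 | 1, 0 => 4 | 0, 1 => 3 | 1, 1 => 1
  | 2, 0 => 2 | 2, 1 => 0 | 3, 0 => 2 | 3, 1 => 1
  | _, _ => 0

lemma tableFacts : ∀ a < 4, ∀ b < 2,
    A2 a b ≤ 3 ∧ B3 a b ≤ 1 ∧ rnk (A2 a b) (B3 a b) ≤ 4 ∧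
    (rnk a b = 0 → A2 a b = a ∧ B3 a b = b) ∧
    (0 < rnk a b → rnk (A2 a b) (B3 a b) < rnk a b) := by decide

lemma fact235 (x y z : ℕ) :
    (2^x*3^y*5^z).factorization 2 = x ∧ (2^x*3^y*5^z).factorization 3 = y ∧
    (2^x*3^y*5^z).factorization 5 = z := by
  have h2 : (2:ℕ)^x ≠ 0 := by positivity
  have h3 : (3:ℕ)^y ≠ 0 := by positivity
  have h5 : (5:ℕ)^z ≠ 0 := by positivity
  rw [Nat.factorization_mul (mul_ne_zero h2 h3) h5, Nat.factorization_mul h2 h3,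
    Nat.Prime.factorization_pow (by norm_num), Nat.Prime.factorization_pow (by norm_num),
    Nat.Prime.factorization_pow (by norm_num)]
  refine ⟨?_, ?_, ?_⟩ <;> simp [Finsupp.add_apply, Finsupp.single_apply]

lemma smooth235 (x y z : ℕ) : ∀ r, r.Prime → r ∣ 2^x*3^y*5^z → r ≤ 5 := by
  intro r hr hd
  rcases (Nat.Prime.dvd_mul hr).mp hd with h | h
  · rcases (Nat.Prime.dvd_mul hr).mp h with h' | h'
    · have := (Nat.prime_dvd_prime_iff_eq hr (by norm_num)).mp (hr.dvd_of_dvd_pow h'); omega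
    · have := (Nat.prime_dvd_prime_iff_eq hr (by norm_num)).mp (hr.dvd_of_dvd_pow h'); omega
  · have := (Nat.prime_dvd_prime_iff_eq hr (by norm_num)).mp (hr.dvd_of_dvd_pow h); omega

lemma smooth_decomp {n : ℕ} (hn : 0 < n) (hs : ∀ r, r.Prime → r ∣ n → r ≤ 5) :
    n = 2^(n.factorization 2) * 3^(n.factorization 3) * 5^(n.factorization 5) := by
  have hsub : n.factorization.support ⊆ ({2,3,5} : Finset ℕ) := by
    intro r hr
    rw [Nat.support_factorization] at hr
    have hrp := Nat.prime_of_mem_primeFactors hr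
    have hrd := Nat.dvd_of_mem_primeFactors hr
    have h5 := hs r hrp hrd
    have h2 := hrp.two_le
    have h4 : r ≠ 4 := by intro h; rw [h] at hrp; exact absurd hrp (by decide)
    simp only [Finset.mem_insert, Finset.mem_singleton]
    omega
  conv_lhs => rw [← Nat.factorization_prod_pow_eq_self hn.ne']
  rw [Finsupp.prod_of_support_subset _ hsub _ (fun i _ => pow_zero i)]
  rw [show ({2,3,5} : Finset ℕ) = insert 2 (insert 3 {5}) from rfl]
  rw [Finset.prod_insert (by decide), Finset.prod_insert (by decide), Finset.prod_singleton]
  ring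

lemma fibEntry_five_pow (c : ℕ) : fibEntry (5^c) ∣ 5^c := by
  rcases Nat.eq_zero_or_pos c with rfl | hc
  · rw [pow_zero, fibEntry_one]
  · have h := prime_pow_dvd_fib_bnd (by norm_num : Nat.Prime 5) hc
    have hb : bnd 5 c = 5^c := by simp [bnd]
    rw [hb] at h
    exact fibEntry_dvd (pow_pos (by norm_num) c) h

lemma step_eq (d w c : ℕ) (hd : 0 < d) (hw : fibEntry d = w) (h5d : Nat.Coprime d 5)
    (h5w : Nat.Coprime w 5) : ∃ c' ≤ c, fibEntry (d * 5^c) = w * 5^c' := by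
  obtain ⟨c', hc', hval⟩ := (Nat.dvd_prime_pow (by norm_num : Nat.Prime 5)).mp
    (fibEntry_five_pow c)
  have hlcm : d * 5^c = Nat.lcm d (5^c) := (Nat.Coprime.lcm_eq_mul (h5d.pow_right c)).symm
  refine ⟨c', hc', ?_⟩
  rw [hlcm, fibEntry_lcm hd (pow_pos (by norm_num) c), hw, hval,
    Nat.Coprime.lcm_eq_mul (h5w.pow_right c')]

lemma step_main {n : ℕ} (hn : 0 < n) (hs : ∀ r, r.Prime → r ∣ n → r ≤ 5)
    (ha : n.factorization 2 ≤ 3) (hb : n.factorization 3 ≤ 1) :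
    ∃ c' ≤ n.factorization 5, fibEntry n =
      2^(A2 (n.factorization 2) (n.factorization 3)) *
      3^(B3 (n.factorization 2) (n.factorization 3)) * 5^c' := by
  have hdec := smooth_decomp hn hs
  set a := n.factorization 2 with hA
  set b := n.factorization 3 with hB
  set c := n.factorization 5 with hC
  clear_value a b c
  interval_cases a <;> interval_cases b
  · obtain ⟨c', h1, h2⟩ := step_eq 1 1 c one_pos fibEntry_one (by norm_num) (by norm_num)
    exact ⟨c', h1, by rw [hdec]; simpa [A2, B3] using h2⟩
  · obtain ⟨c', h1, h2⟩ := step_eq 3 4 c (by norm_num) fibEntry_three (by norm_num) (by norm_num)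
    exact ⟨c', h1, by rw [hdec]; norm_num [A2, B3]; simpa using h2⟩
  · obtain ⟨c', h1, h2⟩ := step_eq 2 3 c (by norm_num) fibEntry_two (by norm_num) (by norm_num)
    exact ⟨c', h1, by rw [hdec]; norm_num [A2, B3]; simpa using h2⟩
  · obtain ⟨c', h1, h2⟩ := step_eq 6 12 c (by norm_num) fibEntry_six (by norm_num) (by norm_num)
    exact ⟨c', h1, by rw [hdec]; norm_num [A2, B3]; simpa using h2⟩
  · obtain ⟨c', h1, h2⟩ := step_eq 4 6 c (by norm_num) fibEntry_four (by norm_num) (by norm_num)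
    exact ⟨c', h1, by rw [hdec]; norm_num [A2, B3]; simpa using h2⟩
  · obtain ⟨c', h1, h2⟩ := step_eq 12 12 c (by norm_num) fibEntry_twelve (by norm_num) (by norm_num)
    exact ⟨c', h1, by rw [hdec]; norm_num [A2, B3]; simpa using h2⟩
  · obtain ⟨c', h1, h2⟩ := step_eq 8 6 c (by norm_num) fibEntry_eight (by norm_num) (by norm_num)
    exact ⟨c', h1, by rw [hdec]; norm_num [A2, B3]; simpa using h2⟩
  · obtain ⟨c', h1, h2⟩ := step_eq 24 12 c (by norm_num) fibEntry_twentyfour (by norm_num) (by norm_num)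
    exact ⟨c', h1, by rw [hdec]; norm_num [A2, B3]; simpa using h2⟩

lemma fibEntry_smooth_cases {n : ℕ} (hn : 0 < n) (hs : ∀ r, r.Prime → r ∣ n → r ≤ 5)
    {r k : ℕ} (hr : r.Prime) (hk : 1 ≤ k) (h : r^k ∣ fibEntry n) :
    (r = 2 ∧ (k ≤ n.factorization 2 - 1 ∨ k ≤ 3)) ∨
    (r = 3 ∧ (k ≤ n.factorization 3 - 1 ∨ k ≤ 1)) ∨
    (r = 5 ∧ k ≤ n.factorization 5) := by
  obtain ⟨q, hq, hd⟩ := pow_dvd_fibEntry_cases n hn r k hr hk h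
  have hqp := Nat.prime_of_mem_primeFactors hq
  have hqn := Nat.dvd_of_mem_primeFactors hq
  have hq5 := hs q hqp hqn
  have hq2 := hqp.two_le
  have hq4 : q ≠ 4 := fun h4 => by rw [h4] at hqp; exact absurd hqp (by decide)
  have hrd : r ∣ bnd q (n.factorization q) := (dvd_pow_self r (by omega)).trans hd
  have hq235 : q = 2 ∨ q = 3 ∨ q = 5 := by omega
  rcases hq235 with rfl | rfl | rfl
  · have hb : bnd 2 (n.factorization 2) = 2^(n.factorization 2 - 1) * 3 := by norm_num [bnd]
    rw [hb] at hd hrd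
    rcases (Nat.Prime.dvd_mul hr).mp hrd with h' | h'
    · have hr2 : r = 2 := (Nat.prime_dvd_prime_iff_eq hr (by norm_num)).mp (hr.dvd_of_dvd_pow h')
      subst hr2
      refine Or.inl ⟨rfl, Or.inl ?_⟩
      have hcop : Nat.Coprime (2^k) 3 := Nat.Coprime.pow_left k (by norm_num)
      exact (Nat.pow_dvd_pow_iff_le_right one_lt_two).mp (hcop.dvd_of_dvd_mul_right hd)
    · have hr3 : r = 3 := (Nat.prime_dvd_prime_iff_eq hr (by norm_num)).mp h'
      subst hr3
      refine Or.inr (Or.inl ⟨rfl, Or.inr ?_⟩)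
      have hcop : Nat.Coprime (3^k) (2^(n.factorization 2 - 1)) :=
        Nat.Coprime.pow _ _ (by norm_num)
      have h3 : (3:ℕ)^k ∣ 3^1 := by simpa using hcop.dvd_of_dvd_mul_left hd
      exact (Nat.pow_dvd_pow_iff_le_right (by norm_num : (1:ℕ) < 3)).mp h3
  · have hb : bnd 3 (n.factorization 3) = 3^(n.factorization 3 - 1) * 2^3 := by norm_num [bnd]
    rw [hb] at hd hrd
    rcases (Nat.Prime.dvd_mul hr).mp hrd with h' | h'
    · have hr3 : r = 3 := (Nat.prime_dvd_prime_iff_eq hr (by norm_num)).mp (hr.dvd_of_dvd_pow h')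
      subst hr3
      refine Or.inr (Or.inl ⟨rfl, Or.inl ?_⟩)
      have hcop : Nat.Coprime (3^k) (2^3) := Nat.Coprime.pow _ _ (by norm_num)
      exact (Nat.pow_dvd_pow_iff_le_right (by norm_num : (1:ℕ) < 3)).mp
        (hcop.dvd_of_dvd_mul_right hd)
    · have hr2 : r = 2 := (Nat.prime_dvd_prime_iff_eq hr (by norm_num)).mp (hr.dvd_of_dvd_pow h')
      subst hr2
      refine Or.inl ⟨rfl, Or.inr ?_⟩
      have hcop : Nat.Coprime (2^k) (3^(n.factorization 3 - 1)) :=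
        Nat.Coprime.pow _ _ (by norm_num)
      exact (Nat.pow_dvd_pow_iff_le_right one_lt_two).mp (hcop.dvd_of_dvd_mul_left hd)
  · have hb : bnd 5 (n.factorization 5) = 5^(n.factorization 5) := by norm_num [bnd]
    rw [hb] at hd hrd
    have hr5 : r = 5 := (Nat.prime_dvd_prime_iff_eq hr (by norm_num)).mp (hr.dvd_of_dvd_pow hrd)
    subst hr5
    refine Or.inr (Or.inr ⟨rfl, ?_⟩)
    exact (Nat.pow_dvd_pow_iff_le_right (by norm_num : (1:ℕ) < 5)).mp hd

lemma fibEntry_smooth_props {n : ℕ} (hn : 0 < n) (hs : ∀ r, r.Prime → r ∣ n → r ≤ 5) :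
    (∀ r, r.Prime → r ∣ fibEntry n → r ≤ 5) ∧
    ((fibEntry n).factorization 2 ≤ n.factorization 2 - 1 ∨ (fibEntry n).factorization 2 ≤ 3) ∧
    ((fibEntry n).factorization 3 ≤ n.factorization 3 - 1 ∨ (fibEntry n).factorization 3 ≤ 1) ∧
    (fibEntry n).factorization 5 ≤ n.factorization 5 := by
  have hz := fibEntry_pos hn
  refine ⟨?_, ?_, ?_, ?_⟩
  · intro r hr hd
    rcases fibEntry_smooth_cases hn hs hr le_rfl (by simpa using hd) with
      ⟨h,_⟩|⟨h,_⟩|⟨h,_⟩ <;> omega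
  · rcases Nat.eq_zero_or_pos ((fibEntry n).factorization 2) with h0 | h0
    · omega
    · have hdvd : 2^((fibEntry n).factorization 2) ∣ fibEntry n :=
        (Nat.Prime.pow_dvd_iff_le_factorization (by norm_num) hz.ne').mpr le_rfl
      rcases fibEntry_smooth_cases hn hs (by norm_num) h0 hdvd with
        ⟨h,h2⟩|⟨h,_⟩|⟨h,_⟩ <;> omega
  · rcases Nat.eq_zero_or_pos ((fibEntry n).factorization 3) with h0 | h0
    · omega
    · have hdvd : 3^((fibEntry n).factorization 3) ∣ fibEntry n :=
        (Nat.Prime.pow_dvd_iff_le_factorization (by norm_num) hz.ne').mpr le_rfl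
      rcases fibEntry_smooth_cases hn hs (by norm_num) h0 hdvd with
        ⟨h,_⟩|⟨h,h2⟩|⟨h,_⟩ <;> omega
  · rcases Nat.eq_zero_or_pos ((fibEntry n).factorization 5) with h0 | h0
    · omega
    · have hdvd : 5^((fibEntry n).factorization 5) ∣ fibEntry n :=
        (Nat.Prime.pow_dvd_iff_le_factorization (by norm_num) hz.ne').mpr le_rfl
      rcases fibEntry_smooth_cases hn hs (by norm_num) h0 hdvd with
        ⟨h,_⟩|⟨h,_⟩|⟨h,h2⟩ <;> omega

lemma phase2shape : ∀ μ : ℕ, ∀ n : ℕ, 0 < n → (∀ r, r.Prime → r ∣ n → r ≤ 5) →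
    n.factorization 2 ≤ 3 → n.factorization 3 ≤ 1 →
    5 * n.factorization 5 + rnk (n.factorization 2) (n.factorization 3) ≤ μ →
    ∃ i, fibEntry (fibEntry^[i] n) = fibEntry^[i] n := by
  intro μ
  induction μ using Nat.strong_induction_on with
  | _ μ IH =>
  intro n hn hs ha hb hμ
  by_cases hfix : fibEntry n = n
  · exact ⟨0, by simpa using hfix⟩
  obtain ⟨c', hc', heq⟩ := step_main hn hs ha hb
  set a := n.factorization 2 with hA
  set b := n.factorization 3 with hB
  set c := n.factorization 5 with hC
  obtain ⟨hA3, hB1, hrnk4, hfix0, hdecr⟩ := tableFacts a (by omega) b (by omega)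
  obtain ⟨hf2, hf3, hf5⟩ := fact235 (A2 a b) (B3 a b) c'
  have hmp : 0 < fibEntry n := fibEntry_pos hn
  have hms : ∀ r, r.Prime → r ∣ fibEntry n → r ≤ 5 := by rw [heq]; exact smooth235 _ _ _
  have hm2 : (fibEntry n).factorization 2 = A2 a b := by rw [heq]; exact hf2
  have hm3 : (fibEntry n).factorization 3 = B3 a b := by rw [heq]; exact hf3
  have hm5 : (fibEntry n).factorization 5 = c' := by rw [heq]; exact hf5
  have hlt : 5 * c' + rnk (A2 a b) (B3 a b) < 5 * c + rnk a b := by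
    rcases Nat.lt_or_ge c' c with h | h
    · omega
    · have hcc : c' = c := by omega
      rcases Nat.eq_zero_or_pos (rnk a b) with h0 | h0
      · exfalso
        apply hfix
        rw [heq, (hfix0 h0).1, (hfix0 h0).2, hcc]
        exact (smooth_decomp hn hs).symm
      · have := hdecr h0; omega
  obtain ⟨i, hi⟩ := IH (5*c' + rnk (A2 a b) (B3 a b)) (by omega) (fibEntry n) hmp hms
      (by rw [hm2]; exact hA3) (by rw [hm3]; exact hB1)
      (by rw [hm2, hm3, hm5])
  exact ⟨i+1, by rw [Function.iterate_succ_apply]; exact hi⟩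

lemma phase2 : ∀ n : ℕ, 0 < n → (∀ r, r.Prime → r ∣ n → r ≤ 5) →
    ∃ i, fibEntry (fibEntry^[i] n) = fibEntry^[i] n := by
  have main : ∀ E n, 0 < n → (∀ r, r.Prime → r ∣ n → r ≤ 5) →
      (n.factorization 2 - 3) + (n.factorization 3 - 1) ≤ E →
      ∃ i, fibEntry (fibEntry^[i] n) = fibEntry^[i] n := by
    intro E
    induction E using Nat.strong_induction_on with
    | _ E IH =>
    intro n hn hs hE
    by_cases hsh : n.factorization 2 ≤ 3 ∧ n.factorization 3 ≤ 1
    · exact phase2shape _ n hn hs hsh.1 hsh.2 le_rfl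
    · obtain ⟨hms, h2, h3, h5⟩ := fibEntry_smooth_props hn hs
      have hmp : 0 < fibEntry n := fibEntry_pos hn
      obtain ⟨i, hi⟩ := IH ((n.factorization 2 - 3) + (n.factorization 3 - 1) - 1)
        (by omega) (fibEntry n) hmp hms (by omega)
      exact ⟨i+1, by rw [Function.iterate_succ_apply]; exact hi⟩
  intro n hn hs
  exact main _ n hn hs le_rfl

lemma sq_sub_one_eq {q : ℕ} (hq : 1 ≤ q) : q^2 - 1 = (q-1)*(q+1) := by
  obtain ⟨q', rfl⟩ : ∃ q', q = q'+1 := ⟨q-1, by omega⟩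
  have h : (q'+1)^2 = q'*(q'+2)+1 := by ring
  have h2 : (q'+1-1)*(q'+1+1) = q'*(q'+2) := by simp
  omega

lemma not_prime_dvd_sq_sub_one {p : ℕ} (hp : p.Prime) : ¬ p ∣ p^2 - 1 := by
  intro h
  have h2 : p ∣ p^2 := dvd_pow_self p two_ne_zero
  have h3 : p ∣ p^2 - (p^2 - 1) := Nat.dvd_sub h2 h
  have h1 : 1 ≤ p^2 := Nat.one_le_pow _ _ hp.pos
  have h4 : p^2 - (p^2-1) = 1 := by omega
  rw [h4, Nat.dvd_one] at h3
  exact hp.one_lt.ne' h3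

lemma prime_ge7_dvd_fibEntry_le {n p : ℕ} (hn : 0 < n)
    (hmax : ∀ r, r.Prime → 7 ≤ r → r ∣ n → r ≤ p) {r : ℕ} (hr : r.Prime) (hr7 : 7 ≤ r)
    (hdvd : r ∣ fibEntry n) : r ≤ p := by
  obtain ⟨q, hq, hd⟩ := pow_dvd_fibEntry_cases n hn r 1 hr le_rfl (by simpa using hdvd)
  have hqp : q.Prime := Nat.prime_of_mem_primeFactors hq
  have hqn : q ∣ n := Nat.dvd_of_mem_primeFactors hq
  simp only [pow_one] at hd
  unfold bnd at hd
  split at hd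
  · next h5 =>
    have := (Nat.prime_dvd_prime_iff_eq hr (by norm_num)).mp (hr.dvd_of_dvd_pow hd)
    omega
  · next h5 =>
    rw [sq_sub_one_eq hqp.one_lt.le, ← mul_assoc] at hd
    rcases (Nat.Prime.dvd_mul hr).mp hd with h | h
    rcases (Nat.Prime.dvd_mul hr).mp h with h' | h'
    · have : r = q := (Nat.prime_dvd_prime_iff_eq hr hqp).mp (hr.dvd_of_dvd_pow h')
      subst this
      exact hmax r hr hr7 hqn
    · have hq1 : 0 < q - 1 := by have := hqp.two_le; omega
      have hle : r ≤ q - 1 := Nat.le_of_dvd hq1 h'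
      have hq7 : 7 ≤ q := by omega
      have := hmax q hqp hq7 hqn
      omega
    · have hle : r ≤ q + 1 := Nat.le_of_dvd (by omega) h
      have hrq : r ≠ q := by
        intro hrq; subst hrq
        have h1 : r ∣ 1 := (Nat.dvd_add_right dvd_rfl).mp h
        rw [Nat.dvd_one] at h1
        omega
      have hrq1 : r ≠ q + 1 := by
        intro hrq1
        have hodd : r % 2 = 1 := hr.eq_two_or_odd.resolve_left (by omega)
        have := hqp.eq_two_or_odd
        omega
      have hq7 : 7 ≤ q := by omega
      have := hmax q hqp hq7 hqn
      omega

lemma factorization_fibEntry_lt {n p : ℕ} (hn : 0 < n) (hp : p.Prime) (hp7 : 7 ≤ p)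
    (hpn : p ∣ n) (hmax : ∀ r, r.Prime → 7 ≤ r → r ∣ n → r ≤ p) :
    (fibEntry n).factorization p < n.factorization p := by
  set e := n.factorization p with he
  have he1 : 1 ≤ e := Nat.Prime.factorization_pos_of_dvd hp (by omega) hpn
  by_contra hcon
  push_neg at hcon
  have hzpos := fibEntry_pos hn
  have hdvd : p^e ∣ fibEntry n := (hp.pow_dvd_iff_le_factorization hzpos.ne').mpr hcon
  obtain ⟨q, hq, hd⟩ := pow_dvd_fibEntry_cases n hn p e hp he1 hdvd
  have hqp : q.Prime := Nat.prime_of_mem_primeFactors hq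
  have hqn : q ∣ n := Nat.dvd_of_mem_primeFactors hq
  have hpd : p ∣ bnd q (n.factorization q) := dvd_trans (dvd_pow_self p (by omega)) hd
  unfold bnd at hd hpd
  split at hd <;> split at hpd
  case isTrue h5 _ =>
    have := (Nat.prime_dvd_prime_iff_eq hp (by norm_num)).mp (hp.dvd_of_dvd_pow hpd)
    omega
  case isTrue h5 h5' => contradiction
  case isFalse h5 h5' => contradiction
  case isFalse h5 _ =>
    by_cases hqeq : q = p
    · subst hqeq
      rw [← he] at hd
      have hstep : q^(e-1) * q ∣ q^(e-1) * (q^2 - 1) := by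
        have heq : q^(e-1) * q = q^e := by rw [← pow_succ]; congr 1; omega
        rw [heq]; exact hd
      have : q ∣ q^2 - 1 := (Nat.mul_dvd_mul_iff_left (pow_pos hqp.pos (e-1))).mp hstep
      exact not_prime_dvd_sq_sub_one hqp this
    · rw [sq_sub_one_eq hqp.one_lt.le, ← mul_assoc] at hpd
      rcases (Nat.Prime.dvd_mul hp).mp hpd with h | h
      rcases (Nat.Prime.dvd_mul hp).mp h with h' | h'
      · exact hqeq ((Nat.prime_dvd_prime_iff_eq hp hqp).mp (hp.dvd_of_dvd_pow h')).symm
      · have hq1 : 0 < q - 1 := by have := hqp.two_le; omega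
        have hle : p ≤ q - 1 := Nat.le_of_dvd hq1 h'
        have hq7 : 7 ≤ q := by omega
        have := hmax q hqp hq7 hqn
        omega
      · have hle : p ≤ q + 1 := Nat.le_of_dvd (by omega) h
        have hq6 : q ≠ 6 := by intro h6; rw [h6] at hqp; exact absurd hqp (by decide)
        by_cases hqs : q ≤ 5
        · omega
        · have hq7 : 7 ≤ q := by omega
          have hqle := hmax q hqp hq7 hqn
          have hpodd : p % 2 = 1 := hp.eq_two_or_odd.resolve_left (by omega)
          have := hqp.eq_two_or_odd
          omega

lemma phase1 : ∀ p : ℕ, ∀ e n : ℕ, 0 < n →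
    (∀ r, r.Prime → 7 ≤ r → r ∣ n → r ≤ p) → n.factorization p ≤ e →
    ∃ i, fibEntry (fibEntry^[i] n) = fibEntry^[i] n := by
  intro p
  induction p using Nat.strong_induction_on with
  | _ p IHp =>
  intro e
  induction e with
  | zero =>
    intro n hn hmax hfac
    by_cases hp7 : p < 7
    · refine phase2 n hn ?_
      intro r hr hrn
      by_cases h7 : 7 ≤ r
      · have := hmax r hr h7 hrn; omega
      · have : r ≠ 6 := by intro h6; rw [h6] at hr; exact absurd hr (by decide)
        omega
    · by_cases hactive : p.Prime ∧ p ∣ n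
      · have := Nat.Prime.factorization_pos_of_dvd hactive.1 (by omega) hactive.2
        omega
      · refine IHp (p-1) (by omega) (n.factorization (p-1)) n hn ?_ le_rfl
        intro r hr hr7 hrn
        have h1 := hmax r hr hr7 hrn
        have h2 : r ≠ p := fun h => hactive (h ▸ ⟨hr, hrn⟩)
        omega
  | succ e IHe =>
    intro n hn hmax hfac
    by_cases hp7 : p < 7
    · refine phase2 n hn ?_
      intro r hr hrn
      by_cases h7 : 7 ≤ r
      · have := hmax r hr h7 hrn; omega
      · have : r ≠ 6 := by intro h6; rw [h6] at hr; exact absurd hr (by decide)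
        omega
    · by_cases hactive : p.Prime ∧ p ∣ n
      · obtain ⟨hp, hpn⟩ := hactive
        have hm : 0 < fibEntry n := fibEntry_pos hn
        have hmax' : ∀ r, r.Prime → 7 ≤ r → r ∣ fibEntry n → r ≤ p :=
          fun r hr h7 hd => prime_ge7_dvd_fibEntry_le hn hmax hr h7 hd
        have hlt := factorization_fibEntry_lt hn hp (by omega) hpn hmax
        obtain ⟨i, hi⟩ := IHe (fibEntry n) hm hmax' (by omega)
        exact ⟨i+1, by rw [Function.iterate_succ_apply]; exact hi⟩
      · refine IHp (p-1) (by omega) (n.factorization (p-1)) n hn ?_ le_rfl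
        intro r hr hr7 hrn
        have h1 := hmax r hr hr7 hrn
        have h2 : r ≠ p := fun h => hactive (h ▸ ⟨hr, hrn⟩)
        omega


theorem fibEntry_iterate_eventually_fixed (k : ℕ) (hk : 0 < k) :
    ∃ i : ℕ, fibEntry (fibEntry^[i] k) = fibEntry^[i] k := by
  refine phase1 k (k.factorization k) k hk ?_ le_rfl
  intro r hr _ hrn
  exact Nat.le_of_dvd hk hrn
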